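/- Let E be a finite-dimensional complex Hilbert space and let ψ₁, ψ₂ : D → B(E) be holomorphic functions with ‖ψ_j(z)‖ ≤ 1 for all z ∈ D and j = 1, 2, such that I − ψ_j(z) is invertible for every z ∈ D, and such that (I + ψ₁(z))(I − ψ₁(z))⁻¹ + (I + ψ₂(z))(I − ψ₂(z))⁻¹ = ((1 + z)/(1 − z))·I for all z ∈ D. Then there exist a self-adjoint operator A ∈ B(E) and a positive contraction B ∈ B(E) (0 ≤ B ≤ I) such that (I + ψ₁(z))(I − ψ₁(z))⁻¹ = i·A + ((1 + z)/(1 − z))·B and (I + ψ₂(z))(I − ψ₂(z))⁻¹ = −i·A + ((1 + z)/(1 − z))·(I − B) for all z ∈ D. -/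

import Mathlib

open ContinuousLinearMap

open Metric Complex Set Filter



noncomputable def Lf : ℂ → ℂ := fun z => (1 + z) / (1 - z)

lemma one_sub_ne {z : ℂ} (hz : z ∈ ball (0:ℂ) 1) : 1 - z ≠ 0 := by
  intro h
  have : z = 1 := by linear_combination -h
  rw [this] at hz
  simp at hz

lemma normSq_lt_one {z : ℂ} (hz : z ∈ ball (0:ℂ) 1) : normSq z < 1 := by
  rw [mem_ball_zero_iff] at hz
  have : normSq z = ‖z‖ ^ 2 := by rw [normSq_eq_norm_sq]
  nlinarith [norm_nonneg z]

lemma Lf_re {z : ℂ} (hz : z ∈ ball (0:ℂ) 1) :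
    (Lf z).re = (1 - normSq z) / normSq (1 - z) := by
  have h := one_sub_ne hz
  have hd : normSq (1 - z) ≠ 0 := by rwa [ne_eq, normSq_eq_zero]
  rw [Lf]
  rw [Complex.div_re]
  rw [← add_div]
  congr 1
  simp only [add_re, one_re, add_im, one_im, sub_re, sub_im, normSq_apply]
  ring

lemma Lf_re_pos {z : ℂ} (hz : z ∈ ball (0:ℂ) 1) : 0 < (Lf z).re := by
  rw [Lf_re hz]
  have h1 := normSq_lt_one hz
  have h2 : 0 < normSq (1 - z) := by
    rw [normSq_pos]; exact one_sub_ne hz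
  exact div_pos (by linarith) h2

lemma hasDerivAt_Lf {z : ℂ} (h : (1:ℂ) - z ≠ 0) : HasDerivAt Lf (2 / (1 - z)^2) z := by
  have h1 : HasDerivAt (fun z : ℂ => 1 + z) 1 z := by
    simpa using (hasDerivAt_id z).const_add (1:ℂ)
  have h2 : HasDerivAt (fun z : ℂ => 1 - z) (-1) z := by
    simpa using (hasDerivAt_id z).const_sub (1:ℂ)
  have := h1.div h2 h
  refine this.congr_deriv ?_
  field_simp
  ring

lemma norm_two_div_sq {z : ℂ} :
    ‖2 / (1 - z)^2‖ = 2 / Complex.normSq (1 - z) := by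
  rw [norm_div, norm_pow, Complex.normSq_eq_norm_sq]
  norm_num



lemma tendsto_path {z : ℂ} (v : ℂ) (hv : v ≠ 0) :
    Tendsto (fun t : ℝ => z + t * v) (nhdsWithin 0 {(0:ℝ)}ᶜ) (nhdsWithin z {z}ᶜ) := by
  rw [tendsto_nhdsWithin_iff]
  constructor
  · apply Filter.Tendsto.mono_left _ nhdsWithin_le_nhds
    have : Continuous (fun t : ℝ => z + t * v) := by continuity
    simpa using this.tendsto 0
  · filter_upwards [self_mem_nhdsWithin] with t ht
    simp only [Set.mem_compl_iff, Set.mem_singleton_iff] at ht ⊢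
    intro h
    apply ht
    have : (t:ℂ) * v = 0 := by linear_combination h
    rcases mul_eq_zero.mp this with h' | h'
    · exact_mod_cast h'
    · exact absurd h' hv

lemma deriv_zero_of_real {g : ℂ → ℂ} {z c : ℂ} (hd : HasDerivAt g c z)
    (hre : ∀ᶠ w in nhds z, (g w).im = 0) : c = 0 := by
  have hs := hasDerivAt_iff_tendsto_slope.mp hd
  have hz0 : (g z).im = 0 := hre.self_of_nhds
  have key : ∀ v : ℂ, v ≠ 0 → Tendsto (fun t : ℝ => slope g z (z + t * v))
      (nhdsWithin 0 {(0:ℝ)}ᶜ) (nhds c) := fun v hv => hs.comp (tendsto_path v hv)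
  have hev : ∀ v : ℂ, ∀ᶠ t : ℝ in nhdsWithin 0 {(0:ℝ)}ᶜ, (g (z + t * v)).im = 0 := by
    intro v
    have hc : Tendsto (fun t : ℝ => z + t * v) (nhdsWithin 0 {(0:ℝ)}ᶜ) (nhds z) := by
      apply Filter.Tendsto.mono_left _ nhdsWithin_le_nhds
      have : Continuous (fun t : ℝ => z + t * v) := by continuity
      simpa using this.tendsto 0
    exact hc.eventually hre
  have h1 : c.im = 0 := by
    have htend : Tendsto (fun t : ℝ => (slope g z (z + t * 1)).im)
        (nhdsWithin 0 {(0:ℝ)}ᶜ) (nhds c.im) :=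
      (Complex.continuous_im.tendsto c).comp (key 1 one_ne_zero)
    have heq : ∀ᶠ t : ℝ in nhdsWithin 0 {(0:ℝ)}ᶜ, (slope g z (z + t * 1)).im = 0 := by
      filter_upwards [hev 1] with t ht
      simp only [mul_one] at ht
      rw [slope_def_field]
      have h2 : (z + (t:ℂ)*1 - z) = (t:ℂ) := by ring
      rw [h2, Complex.div_im]
      simp [Complex.sub_im, ht, hz0]
    exact tendsto_nhds_unique (Filter.Tendsto.congr' heq htend) tendsto_const_nhds
  have h2 : c.re = 0 := by
    have htend : Tendsto (fun t : ℝ => (slope g z (z + t * Complex.I)).re)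
        (nhdsWithin 0 {(0:ℝ)}ᶜ) (nhds c.re) :=
      (Complex.continuous_re.tendsto c).comp (key Complex.I Complex.I_ne_zero)
    have heq : ∀ᶠ t : ℝ in nhdsWithin 0 {(0:ℝ)}ᶜ, (slope g z (z + t * Complex.I)).re = 0 := by
      filter_upwards [hev Complex.I] with t ht
      rw [slope_def_field]
      have h2 : (z + (t:ℂ)*Complex.I - z) = (t:ℂ)*Complex.I := by ring
      rw [h2, Complex.div_re]
      simp [Complex.sub_im, ht, hz0]
    exact tendsto_nhds_unique (Filter.Tendsto.congr' heq htend) tendsto_const_nhds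
  exact Complex.ext h2 h1



lemma norm_lt_one_of_normSq {x : ℂ} (h : normSq x < 1) : ‖x‖ < 1 := by
  have h1 : ‖x‖^2 < 1 := by rwa [← normSq_eq_norm_sq]
  nlinarith [norm_nonneg x]

lemma herglotz_deriv_bound {g : ℂ → ℂ} (hd : DifferentiableOn ℂ g (ball 0 1))
    (hre : ∀ w ∈ ball (0:ℂ) 1, 0 < (g w).re) : ‖deriv g 0‖ ≤ 2 * (g 0).re := by
  set c := g 0 with hc_def
  have h0 : (0:ℂ) ∈ ball (0:ℂ) 1 := by simp
  have hc : 0 < c.re := hre 0 h0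
  have hne : ∀ w ∈ ball (0:ℂ) 1, g w + (starRingEnd ℂ) c ≠ 0 := by
    intro w hw h
    have : (g w + (starRingEnd ℂ) c).re = 0 := by rw [h]; simp
    rw [Complex.add_re, Complex.conj_re] at this
    have := hre w hw
    linarith
  set ψ : ℂ → ℂ := fun w => (g w - c) / (g w + (starRingEnd ℂ) c) with hψ_def
  have hψ0 : ψ 0 = 0 := by simp [hψ_def, hc_def]
  have hψd : DifferentiableOn ℂ ψ (ball 0 1) :=
    (hd.sub (differentiableOn_const c)).div
      (hd.add (differentiableOn_const _)) hne
  have hmaps : MapsTo ψ (ball 0 1) (ball (ψ 0) 1) := by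
    rw [hψ0]
    intro w hw
    rw [mem_ball_zero_iff]
    apply norm_lt_one_of_normSq
    rw [hψ_def]
    simp only [normSq_div]
    have hden : 0 < normSq (g w + (starRingEnd ℂ) c) := by
      rw [normSq_pos]; exact hne w hw
    rw [div_lt_one hden]
    have hw' := hre w hw
    simp only [normSq_apply, Complex.sub_re, Complex.sub_im, Complex.add_re, Complex.add_im,
      Complex.conj_re, Complex.conj_im]
    nlinarith
  have hschwarz : ‖deriv ψ 0‖ ≤ 1 / 1 :=
    Complex.norm_deriv_le_div_of_mapsTo_ball hψd (hmaps.mono_right ball_subset_closedBall) one_pos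
  -- compute deriv ψ 0
  have hg0 : HasDerivAt g (deriv g 0) 0 :=
    (hd.differentiableAt (isOpen_ball.mem_nhds h0)).hasDerivAt
  set d := deriv g 0
  have hψderiv : HasDerivAt ψ
      ((d * (c + (starRingEnd ℂ) c) - (c - c) * d) / (c + (starRingEnd ℂ) c)^2) 0 :=
    (hg0.sub_const c).div (hg0.add_const _) (hne 0 h0)
  have hval : (d * (c + (starRingEnd ℂ) c) - (c - c) * d) / (c + (starRingEnd ℂ) c)^2
      = d / (c + (starRingEnd ℂ) c) := by
    have h2 : c + (starRingEnd ℂ) c ≠ 0 := hne 0 h0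
    field_simp
    ring
  have hconj : c + (starRingEnd ℂ) c = ((2 * c.re : ℝ) : ℂ) := Complex.add_conj c
  have : ‖d / (c + (starRingEnd ℂ) c)‖ ≤ 1 := by
    rw [← hval, ← hψderiv.deriv]
    simpa using hschwarz
  rw [norm_div, hconj, Complex.norm_real, Real.norm_of_nonneg (by linarith)] at this
  calc ‖d‖ = ‖d‖ / (2 * c.re) * (2 * c.re) := by field_simp
  _ ≤ 1 * (2 * c.re) := by
      apply mul_le_mul_of_nonneg_right this (by linarith)
  _ = 2 * c.re := by ring





section Mobius
variable {z₀ : ℂ} (hz₀ : z₀ ∈ ball (0:ℂ) 1)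

lemma mobius_den_ne (hz₀ : z₀ ∈ ball (0:ℂ) 1) {w : ℂ} (hw : w ∈ ball (0:ℂ) 1) :
    1 + (starRingEnd ℂ) z₀ * w ≠ 0 := by
  intro h
  have h1 : ‖(starRingEnd ℂ) z₀ * w‖ < 1 := by
    rw [norm_mul, RCLike.norm_conj]
    rw [mem_ball_zero_iff] at hz₀ hw
    calc ‖z₀‖ * ‖w‖ ≤ 1 * ‖w‖ := by
          apply mul_le_mul_of_nonneg_right hz₀.le (norm_nonneg _)
    _ < 1 := by simpa using hw
  have h2 : (starRingEnd ℂ) z₀ * w = -1 := by linear_combination h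
  rw [h2] at h1
  simp at h1

lemma mobius_maps (hz₀ : z₀ ∈ ball (0:ℂ) 1) {w : ℂ} (hw : w ∈ ball (0:ℂ) 1) :
    (w + z₀) / (1 + (starRingEnd ℂ) z₀ * w) ∈ ball (0:ℂ) 1 := by
  rw [mem_ball_zero_iff]
  have hden : 0 < normSq (1 + (starRingEnd ℂ) z₀ * w) := by
    rw [normSq_pos]; exact mobius_den_ne hz₀ hw
  have key : normSq (1 + (starRingEnd ℂ) z₀ * w) - normSq (w + z₀)
      = (1 - normSq z₀) * (1 - normSq w) := by
    simp only [normSq_apply, Complex.add_re, Complex.add_im, Complex.mul_re, Complex.mul_im,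
      Complex.one_re, Complex.one_im, Complex.conj_re, Complex.conj_im]
    ring
  have h1 := normSq_lt_one hz₀
  have h2 := normSq_lt_one hw
  have hlt : normSq (w + z₀) < normSq (1 + (starRingEnd ℂ) z₀ * w) := by nlinarith
  have : ‖(w + z₀) / (1 + (starRingEnd ℂ) z₀ * w)‖^2 < 1 := by
    have e1 : ‖w + z₀‖^2 = normSq (w+z₀) := by rw [← normSq_eq_norm_sq]
    have e2 : ‖1 + (starRingEnd ℂ) z₀ * w‖^2 = normSq (1 + (starRingEnd ℂ) z₀ * w) := by
      rw [← normSq_eq_norm_sq]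
    rw [norm_div, div_pow, e1, e2, div_lt_one hden]
    exact hlt
  nlinarith [norm_nonneg ((w + z₀) / (1 + (starRingEnd ℂ) z₀ * w))]

lemma mobius_hasDeriv (hz₀ : z₀ ∈ ball (0:ℂ) 1) :
    HasDerivAt (fun w => (w + z₀) / (1 + (starRingEnd ℂ) z₀ * w))
      (((1 - normSq z₀ : ℝ) : ℂ)) 0 := by
  have h0 : (0:ℂ) ∈ ball (0:ℂ) 1 := by simp
  have hnum : HasDerivAt (fun w : ℂ => w + z₀) 1 0 := by
    simpa using (hasDerivAt_id (0:ℂ)).add_const z₀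
  have hden : HasDerivAt (fun w : ℂ => 1 + (starRingEnd ℂ) z₀ * w) ((starRingEnd ℂ) z₀) 0 := by
    simpa using ((hasDerivAt_id (0:ℂ)).const_mul ((starRingEnd ℂ) z₀)).const_add 1
  have := hnum.div hden (mobius_den_ne hz₀ h0)
  refine this.congr_deriv ?_
  have : z₀ * (starRingEnd ℂ) z₀ = (normSq z₀ : ℂ) := Complex.mul_conj z₀
  push_cast
  rw [← this]
  field_simp
  ring

lemma mobius_diffOn (hz₀ : z₀ ∈ ball (0:ℂ) 1) :
    DifferentiableOn ℂ (fun w => (w + z₀) / (1 + (starRingEnd ℂ) z₀ * w)) (ball 0 1) := by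
  apply DifferentiableOn.div
  · exact (differentiableOn_id.add (differentiableOn_const _))
  · exact (differentiableOn_const _).add ((differentiableOn_const _).mul differentiableOn_id)
  · exact fun w hw => mobius_den_ne hz₀ hw

end Mobius

lemma Lf_diffOn : DifferentiableOn ℂ Lf (ball 0 1) := by
  apply DifferentiableOn.div
  · exact (differentiableOn_const _).add differentiableOn_id
  · exact (differentiableOn_const _).sub differentiableOn_id
  · exact fun z hz => one_sub_ne hz

lemma key_real_ratio {f : ℂ → ℂ} {M : ℝ}
    (hf : DifferentiableOn ℂ f (ball 0 1))
    (h0 : ∀ z ∈ ball (0:ℂ) 1, 0 < (f z).re)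
    (h1 : ∀ z ∈ ball (0:ℂ) 1, (f z).re < M * (Lf z).re)
    {z₀ : ℂ} (hz₀ : z₀ ∈ ball (0:ℂ) 1) :
    ∃ t : ℝ, deriv f z₀ = (t : ℂ) * (2 / (1 - z₀)^2) := by
  have h0' := h0 z₀ hz₀
  have h1' := h1 z₀ hz₀
  have hLpos := Lf_re_pos hz₀
  have hM : 0 < M := by nlinarith
  set m : ℂ → ℂ := fun w => (w + z₀) / (1 + (starRingEnd ℂ) z₀ * w) with hm_def
  have hmm : ∀ w ∈ ball (0:ℂ) 1, m w ∈ ball (0:ℂ) 1 := fun w hw => mobius_maps hz₀ hw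
  have hm0 : m 0 = z₀ := by simp [hm_def]
  set μ : ℂ := ((1 - normSq z₀ : ℝ) : ℂ) with hμ_def
  have hμ : μ ≠ 0 := by
    rw [hμ_def, Ne, Complex.ofReal_eq_zero]
    have := normSq_lt_one hz₀
    intro h; linarith
  have h0ball : (0:ℂ) ∈ ball (0:ℂ) 1 := by simp
  have hfz : HasDerivAt f (deriv f z₀) z₀ :=
    (hf.differentiableAt (isOpen_ball.mem_nhds hz₀)).hasDerivAt
  have hmderiv : HasDerivAt m μ 0 := mobius_hasDeriv hz₀
  have hg : HasDerivAt (f ∘ m) (deriv f z₀ * μ) 0 := by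
    have := (hm0 ▸ hfz : HasDerivAt f (deriv f z₀) (m 0)).comp 0 hmderiv
    exact this
  have hgd : DifferentiableOn ℂ (f ∘ m) (ball 0 1) :=
    hf.comp (mobius_diffOn hz₀) (fun w hw => hmm w hw)
  have b1 : ‖deriv f z₀ * μ‖ ≤ 2 * (f z₀).re := by
    have hb := herglotz_deriv_bound hgd (fun w hw => h0 (m w) (hmm w hw))
    rwa [hg.deriv, Function.comp_apply, hm0] at hb
  -- second function
  set F2 : ℂ → ℂ := fun w => (M:ℂ) * Lf w - f w with hF2_def
  have hF2d : DifferentiableOn ℂ F2 (ball 0 1) :=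
    (Lf_diffOn.const_mul _).sub hf
  have hF2re : ∀ w ∈ ball (0:ℂ) 1, 0 < (F2 w).re := by
    intro w hw
    have := h1 w hw
    simp only [hF2_def, Complex.sub_re, Complex.mul_re, Complex.ofReal_re, Complex.ofReal_im]
    simp only [zero_mul, sub_zero]
    linarith
  have hF2z : HasDerivAt F2 ((M:ℂ) * (2 / (1 - z₀)^2) - deriv f z₀) z₀ :=
    ((hasDerivAt_Lf (one_sub_ne hz₀)).const_mul ((M:ℂ))).sub hfz
  have hg2 : HasDerivAt (F2 ∘ m) (((M:ℂ) * (2 / (1 - z₀)^2) - deriv f z₀) * μ) 0 :=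
    (hm0 ▸ hF2z : HasDerivAt F2 _ (m 0)).comp 0 hmderiv
  have hg2d : DifferentiableOn ℂ (F2 ∘ m) (ball 0 1) :=
    hF2d.comp (mobius_diffOn hz₀) (fun w hw => hmm w hw)
  have b2 : ‖((M:ℂ) * (2 / (1 - z₀)^2) - deriv f z₀) * μ‖
      ≤ 2 * (M * (Lf z₀).re - (f z₀).re) := by
    have hb := herglotz_deriv_bound hg2d (fun w hw => hF2re (m w) (hmm w hw))
    rw [hg2.deriv, Function.comp_apply, hm0] at hb
    refine hb.trans_eq ?_
    simp only [hF2_def, Complex.sub_re, Complex.mul_re, Complex.ofReal_re, Complex.ofReal_im]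
    ring
  set a : ℂ := deriv f z₀ * μ with ha_def
  set b : ℂ := ((M:ℂ) * (2 / (1 - z₀)^2) - deriv f z₀) * μ with hb_def
  have hab : a + b = (M:ℂ) * (2 / (1 - z₀)^2) * μ := by rw [ha_def, hb_def]; ring
  have hnormSq_pos : 0 < normSq (1 - z₀) := by rw [normSq_pos]; exact one_sub_ne hz₀
  have hnorm_ab : ‖a + b‖ = 2 * (M * (Lf z₀).re) := by
    rw [hab, norm_mul, norm_mul, Complex.norm_real, Complex.norm_real, norm_two_div_sq,
      Real.norm_of_nonneg hM.le, Real.norm_of_nonneg (by have := normSq_lt_one hz₀; linarith),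
      Lf_re hz₀]
    field_simp
  have htri : ‖a + b‖ = ‖a‖ + ‖b‖ := by
    refine le_antisymm (norm_add_le a b) ?_
    calc ‖a‖ + ‖b‖ ≤ 2 * (f z₀).re + 2 * (M * (Lf z₀).re - (f z₀).re) := add_le_add b1 b2
    _ = 2 * (M * (Lf z₀).re) := by ring
    _ = ‖a + b‖ := hnorm_ab.symm
  obtain ⟨r₁, r₂, hr₁, hr₂, hsum1, hA, hB⟩ :=
    (sameRay_iff_norm_add.mpr htri).exists_eq_smul_add
  refine ⟨r₁ * M, ?_⟩
  have : a = (r₁:ℂ) * ((M:ℂ) * (2 / (1 - z₀)^2) * μ) := by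
    rw [← hab, ← Complex.real_smul]; exact hA
  rw [ha_def] at this
  have hμcancel : deriv f z₀ = (r₁:ℂ) * ((M:ℂ) * (2 / (1 - z₀)^2)) := by
    apply mul_right_cancel₀ hμ
    rw [this]; ring
  rw [hμcancel]; push_cast; ring





lemma const_of_deriv_zero {g : ℂ → ℂ} (hg : DifferentiableOn ℂ g (ball 0 1))
    (h : ∀ z ∈ ball (0:ℂ) 1, deriv g z = 0) : ∀ z ∈ ball (0:ℂ) 1, g z = g 0 := by
  intro z hz
  apply Convex.is_const_of_fderivWithin_eq_zero (convex_ball (0:ℂ) 1) hg _ hz (by simp)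
  intro x hx
  have hdx : HasDerivAt g 0 x := by
    have := (hg.differentiableAt (isOpen_ball.mem_nhds hx)).hasDerivAt
    rwa [h x hx] at this
  have hfd : HasFDerivAt g (0 : ℂ →L[ℂ] ℂ) x := by
    have h2 := hdx.hasFDerivAt
    rwa [toSpanSingleton_zero] at h2
  rw [hfd.hasFDerivWithinAt.fderivWithin (isOpen_ball.uniqueDiffWithinAt hx)]

lemma mem_ball_ofReal {x : ℝ} (h : |x| < 1) : ((x:ℂ)) ∈ ball (0:ℂ) 1 := by
  rw [mem_ball_zero_iff, Complex.norm_real, Real.norm_eq_abs]; exact h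

theorem scalar_herglotz {f : ℂ → ℂ} {M : ℝ}
    (hf : DifferentiableOn ℂ f (ball 0 1))
    (h0 : ∀ z ∈ ball (0:ℂ) 1, 0 ≤ (f z).re)
    (h1 : ∀ z ∈ ball (0:ℂ) 1, (f z).re ≤ M * (Lf z).re) :
    ∀ z ∈ ball (0:ℂ) 1, f z = (((f 0).re : ℝ) : ℂ) * Lf z + Complex.I * (((f 0).im : ℝ) : ℂ) := by
  have h0ball : (0:ℂ) ∈ ball (0:ℂ) 1 := by simp
  -- step 1 : derivative is a real multiple of 2/(1-z)^2 at each point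
  have hreal : ∀ z ∈ ball (0:ℂ) 1, ∃ s : ℝ, deriv f z = (s:ℂ) * (2 / (1 - z)^2) := by
    intro z hz
    have hf1 : DifferentiableOn ℂ (fun w => f w + Lf w) (ball 0 1) := hf.add Lf_diffOn
    have hp0 : ∀ w ∈ ball (0:ℂ) 1, 0 < ((fun w => f w + Lf w) w).re := by
      intro w hw
      simp only [Complex.add_re]
      have := h0 w hw; have := Lf_re_pos hw; linarith
    have hp1 : ∀ w ∈ ball (0:ℂ) 1, ((fun w => f w + Lf w) w).re < (M + 2) * (Lf w).re := by
      intro w hw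
      simp only [Complex.add_re]
      have := h1 w hw; have := Lf_re_pos hw; nlinarith
    obtain ⟨t, ht⟩ := key_real_ratio hf1 hp0 hp1 hz
    refine ⟨t - 1, ?_⟩
    have hdadd : deriv (fun w => f w + Lf w) z = deriv f z + 2 / (1 - z)^2 := by
      have hfz : HasDerivAt f (deriv f z) z :=
        (hf.differentiableAt (isOpen_ball.mem_nhds hz)).hasDerivAt
      exact (hfz.add (hasDerivAt_Lf (one_sub_ne hz))).deriv
    rw [hdadd] at ht
    push_cast
    linear_combination ht
  -- step 2 : u is real-valued
  set u : ℂ → ℂ := fun z => deriv f z * ((1 - z)^2 / 2) with hu_def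
  have him : ∀ z ∈ ball (0:ℂ) 1, (u z).im = 0 := by
    intro z hz
    obtain ⟨s, hs⟩ := hreal z hz
    have h2 : u z = (s:ℂ) := by
      rw [hu_def]
      simp only
      rw [hs]
      have := one_sub_ne hz
      field_simp
    rw [h2]
    simp
  -- step 3 : u differentiable
  have hfd' : DifferentiableOn ℂ (deriv f) (ball 0 1) :=
    ((hf.analyticOnNhd isOpen_ball).deriv).differentiableOn
  have hud : DifferentiableOn ℂ u (ball 0 1) := by
    apply hfd'.mul
    apply DifferentiableOn.div_const
    exact (((differentiableOn_const _).sub differentiableOn_id).pow 2)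
  -- step 4 : deriv u = 0
  have hu0 : ∀ z ∈ ball (0:ℂ) 1, deriv u z = 0 := by
    intro z hz
    apply deriv_zero_of_real (hud.differentiableAt (isOpen_ball.mem_nhds hz)).hasDerivAt
    exact eventually_of_mem (isOpen_ball.mem_nhds hz) him
  -- step 5 : u constant
  have huc := const_of_deriv_zero hud hu0
  set t₀ : ℝ := (u 0).re with ht₀_def
  have hu0val : u 0 = (t₀:ℂ) := by
    have := him 0 h0ball
    rw [ht₀_def]
    exact (Complex.re_add_im (u 0)) ▸ by
      rw [this]; simp
  have hderiv_f : ∀ z ∈ ball (0:ℂ) 1, deriv f z = (t₀:ℂ) * (2 / (1 - z)^2) := by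
    intro z hz
    have h2 := huc z hz
    rw [hu0val] at h2
    have h3 := one_sub_ne hz
    rw [hu_def] at h2
    simp only at h2
    field_simp at h2
    field_simp
    linear_combination h2
  -- step 6 : f - t₀ Lf constant
  set g : ℂ → ℂ := fun z => f z - (t₀:ℂ) * Lf z with hg_def
  have hgd : DifferentiableOn ℂ g (ball 0 1) := hf.sub (Lf_diffOn.const_mul _)
  have hg0 : ∀ z ∈ ball (0:ℂ) 1, deriv g z = 0 := by
    intro z hz
    have hfz : HasDerivAt f (deriv f z) z :=
      (hf.differentiableAt (isOpen_ball.mem_nhds hz)).hasDerivAt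
    have : HasDerivAt g (deriv f z - (t₀:ℂ) * (2 / (1 - z)^2)) z :=
      hfz.sub ((hasDerivAt_Lf (one_sub_ne hz)).const_mul _)
    rw [this.deriv, hderiv_f z hz]
    ring
  have hgc := const_of_deriv_zero hgd hg0
  have hLf0 : Lf 0 = 1 := by simp [Lf]
  set c : ℂ := f 0 - (t₀:ℂ) with hc_def
  have hrep : ∀ z ∈ ball (0:ℂ) 1, f z = (t₀:ℂ) * Lf z + c := by
    intro z hz
    have := hgc z hz
    rw [hg_def] at this
    simp only at this
    rw [hLf0] at this
    rw [hc_def]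
    linear_combination this
  -- step 7 : c.re = 0
  have hcre : c.re = 0 := by
    have hconstraint : ∀ v : ℝ, 0 < v → 0 ≤ t₀ * v + c.re ∧ t₀ * v + c.re ≤ M * v := by
      intro v hv
      set x : ℝ := (v - 1) / (v + 1) with hx_def
      have hv1 : (0:ℝ) < v + 1 := by linarith
      have hx1 : x < 1 := by rw [hx_def, div_lt_one hv1]; linarith
      have hx2 : -1 < x := by
        rw [hx_def, lt_div_iff₀ hv1]; linarith
      have hxball : ((x:ℂ)) ∈ ball (0:ℂ) 1 := mem_ball_ofReal (abs_lt.mpr ⟨hx2, hx1⟩)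
      have h1x : (1:ℝ) - x ≠ 0 := by
        intro h; rw [sub_eq_zero] at h; rw [← h] at hx1; exact lt_irrefl _ hx1
      have hLfx : Lf (x:ℂ) = (((1 + x) / (1 - x) : ℝ) : ℂ) := by
        rw [Lf]; push_cast; ring_nf
      have hLfre : (Lf (x:ℂ)).re = v := by
        rw [hLfx, Complex.ofReal_re, hx_def]
        field_simp
        ring
      have hfx := hrep (x:ℂ) hxball
      have hre : (f (x:ℂ)).re = t₀ * v + c.re := by
        rw [hfx, Complex.add_re, Complex.mul_re, Complex.ofReal_re, Complex.ofReal_im, hLfre]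
        ring_nf
      constructor
      · have := h0 (x:ℂ) hxball; rw [hre] at this; linarith
      · have := h1 (x:ℂ) hxball; rw [hre, hLfre] at this; linarith
    have hge : 0 ≤ c.re := by
      have hlim : Tendsto (fun v : ℝ => -t₀ * v) (nhdsWithin 0 (Set.Ioi 0)) (nhds 0) := by
        have hcont : Continuous (fun v : ℝ => -t₀ * v) := continuous_const.mul continuous_id
        have : Tendsto (fun v : ℝ => -t₀ * v) (nhds 0) (nhds 0) := by
          simpa using hcont.tendsto (0:ℝ)
        exact this.mono_left nhdsWithin_le_nhds
      apply le_of_tendsto hlim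
      filter_upwards [self_mem_nhdsWithin] with v hv
      have := (hconstraint v hv).1
      linarith
    have hle : c.re ≤ 0 := by
      have hlim : Tendsto (fun v : ℝ => (M - t₀) * v) (nhdsWithin 0 (Set.Ioi 0)) (nhds 0) := by
        have hcont : Continuous (fun v : ℝ => (M - t₀) * v) := continuous_const.mul continuous_id
        have : Tendsto (fun v : ℝ => (M - t₀) * v) (nhds 0) (nhds 0) := by
          simpa using hcont.tendsto (0:ℝ)
        exact this.mono_left nhdsWithin_le_nhds
      apply ge_of_tendsto hlim
      filter_upwards [self_mem_nhdsWithin] with v hv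
      have := (hconstraint v hv).2
      linarith
    linarith
  -- step 8 : conclude
  have hf0 : f 0 = (t₀:ℂ) + c := by
    have := hrep 0 h0ball
    rw [hLf0] at this
    linear_combination this
  have hre0 : (f 0).re = t₀ := by rw [hf0]; simp [hcre]
  have him0 : (f 0).im = c.im := by rw [hf0]; simp
  intro z hz
  have e1 : (((f 0).re : ℝ) : ℂ) = ((t₀ : ℝ) : ℂ) := by exact_mod_cast congrArg Complex.ofReal hre0
  have e2 : (((f 0).im : ℝ) : ℂ) = ((c.im : ℝ) : ℂ) := by
    exact_mod_cast congrArg Complex.ofReal him0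
  have e3 : ((c.re : ℝ) : ℂ) = 0 := by rw [hcre]; simp
  have e4 := Complex.re_add_im c
  rw [hrep z hz, e1, e2]
  linear_combination e3 - e4





section Cayley

variable {E : Type*} [NormedAddCommGroup E] [InnerProductSpace ℂ E]

lemma cayley_re_nonneg (ψ : E →L[ℂ] E) (hn : ‖ψ‖ ≤ 1) (hinv : IsUnit (1 - ψ)) (x : E) :
    0 ≤ (inner ℂ x (((1 + ψ) * Ring.inverse (1 - ψ)) x) : ℂ).re := by
  set y : E := Ring.inverse (1 - ψ) x with hy_def
  have hxy : (1 - ψ) y = x := by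
    have h := Ring.mul_inverse_cancel (1 - ψ) hinv
    calc (1 - ψ) y = ((1 - ψ) * Ring.inverse (1 - ψ)) x := rfl
    _ = (1 : E →L[ℂ] E) x := by rw [h]
    _ = x := rfl
  have happ : ((1 + ψ) * Ring.inverse (1 - ψ)) x = y + ψ y := by
    show (1 + ψ) y = y + ψ y
    simp [ContinuousLinearMap.add_apply]
  rw [happ, ← hxy]
  have hexp : (inner ℂ ((1 - ψ) y) (y + ψ y) : ℂ)
      = inner ℂ y y + inner ℂ y (ψ y) - inner ℂ (ψ y) y - inner ℂ (ψ y) (ψ y) := by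
    rw [ContinuousLinearMap.sub_apply, ContinuousLinearMap.one_apply]
    rw [inner_sub_left, inner_add_right, inner_add_right]
    ring
  rw [hexp]
  have h1 : (inner ℂ y y : ℂ).re = ‖y‖^2 := by
    have := inner_self_eq_norm_sq (𝕜 := ℂ) y; simpa using this
  have h2 : (inner ℂ (ψ y) (ψ y) : ℂ).re = ‖ψ y‖^2 := by
    have := inner_self_eq_norm_sq (𝕜 := ℂ) (ψ y); simpa using this
  have h3 : (inner ℂ y (ψ y) : ℂ).re = (inner ℂ (ψ y) y : ℂ).re := by
    rw [← inner_conj_symm y (ψ y)]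
    exact Complex.conj_re _
  have h4 : ‖ψ y‖ ≤ ‖y‖ := by
    calc ‖ψ y‖ ≤ ‖ψ‖ * ‖y‖ := ψ.le_opNorm y
    _ ≤ 1 * ‖y‖ := by apply mul_le_mul_of_nonneg_right hn (norm_nonneg _)
    _ = ‖y‖ := one_mul _
  simp only [Complex.sub_re, Complex.add_re]
  rw [h1, h2]
  nlinarith [norm_nonneg y, norm_nonneg (ψ y)]

end Cayley

set_option maxHeartbeats 1000000 in
/-- If `ψ₁, ψ₂ : D → B(E)` are holomorphic contraction-valued functions with `I - ψ_j(z)`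
invertible whose Cayley transforms sum to `((1+z)/(1-z)) • I`, then there exist a
self-adjoint `A` and a positive contraction `B` (`0 ≤ B ≤ I`) with
`(I + ψ₁(z))(I - ψ₁(z))⁻¹ = i•A + ((1+z)/(1-z))•B` and
`(I + ψ₂(z))(I - ψ₂(z))⁻¹ = -i•A + ((1+z)/(1-z))•(I - B)` on the disc. -/
theorem stmt_11 {E : Type*} [NormedAddCommGroup E] [InnerProductSpace ℂ E]
    [FiniteDimensional ℂ E]
    (ψ₁ ψ₂ : ℂ → E →L[ℂ] E)
    (hd₁ : ∀ z ∈ Metric.ball (0 : ℂ) 1, DifferentiableAt ℂ ψ₁ z)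
    (hd₂ : ∀ z ∈ Metric.ball (0 : ℂ) 1, DifferentiableAt ℂ ψ₂ z)
    (hn₁ : ∀ z ∈ Metric.ball (0 : ℂ) 1, ‖ψ₁ z‖ ≤ 1)
    (hn₂ : ∀ z ∈ Metric.ball (0 : ℂ) 1, ‖ψ₂ z‖ ≤ 1)
    (hinv₁ : ∀ z ∈ Metric.ball (0 : ℂ) 1, IsUnit (1 - ψ₁ z))
    (hinv₂ : ∀ z ∈ Metric.ball (0 : ℂ) 1, IsUnit (1 - ψ₂ z))
    (hsum : ∀ z ∈ Metric.ball (0 : ℂ) 1,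
      (1 + ψ₁ z) * Ring.inverse (1 - ψ₁ z) + (1 + ψ₂ z) * Ring.inverse (1 - ψ₂ z)
        = ((1 + z) / (1 - z)) • (1 : E →L[ℂ] E)) :
    ∃ A B : E →L[ℂ] E,
      IsSelfAdjoint A ∧ B.IsPositive ∧ (1 - B).IsPositive ∧
      (∀ z ∈ Metric.ball (0 : ℂ) 1,
        (1 + ψ₁ z) * Ring.inverse (1 - ψ₁ z)
          = Complex.I • A + ((1 + z) / (1 - z)) • B) ∧
      (∀ z ∈ Metric.ball (0 : ℂ) 1,
        (1 + ψ₂ z) * Ring.inverse (1 - ψ₂ z)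
          = -(Complex.I • A) + ((1 + z) / (1 - z)) • (1 - B)) := by
  have h0D : (0:ℂ) ∈ ball (0:ℂ) 1 := by simp
  set F : ℂ → E →L[ℂ] E := fun z => (1 + ψ₁ z) * Ring.inverse (1 - ψ₁ z) with hF_def
  set G : ℂ → E →L[ℂ] E := fun z => (1 + ψ₂ z) * Ring.inverse (1 - ψ₂ z) with hG_def
  have hLf_eq : ∀ z : ℂ, Lf z = (1 + z) / (1 - z) := fun _ => rfl
  have hre₁ : ∀ z ∈ ball (0:ℂ) 1, ∀ x : E, 0 ≤ (inner ℂ x (F z x) : ℂ).re :=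
    fun z hz x => cayley_re_nonneg _ (hn₁ z hz) (hinv₁ z hz) x
  have hre₂ : ∀ z ∈ ball (0:ℂ) 1, ∀ x : E, 0 ≤ (inner ℂ x (G z x) : ℂ).re :=
    fun z hz x => cayley_re_nonneg _ (hn₂ z hz) (hinv₂ z hz) x
  have hLf0 : Lf 0 = 1 := by rw [hLf_eq]; norm_num
  have hinner_sum : ∀ z ∈ ball (0:ℂ) 1, ∀ x : E,
      (inner ℂ x (F z x) : ℂ).re + (inner ℂ x (G z x) : ℂ).re = (Lf z).re * ‖x‖^2 := by
    intro z hz x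
    have h := hsum z hz
    have h2 : F z x + G z x = ((1 + z) / (1 - z)) • x := by
      have := congrArg (fun T : E →L[ℂ] E => T x) h
      simpa [hF_def, hG_def] using this
    have h3 : (inner ℂ x (F z x) : ℂ) + inner ℂ x (G z x) = Lf z * ((‖x‖:ℂ))^2 := by
      rw [← inner_add_right, h2, inner_smul_right, inner_self_eq_norm_sq_to_K, hLf_eq]
      rfl
    have h4 := congrArg Complex.re h3
    rw [Complex.add_re] at h4
    rw [h4]
    have : ((‖x‖:ℂ))^2 = ((‖x‖^2 : ℝ) : ℂ) := by push_cast; ring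
    rw [this, Complex.mul_re, Complex.ofReal_re, Complex.ofReal_im]
    ring
  have hupper : ∀ z ∈ ball (0:ℂ) 1, ∀ x : E,
      (inner ℂ x (F z x) : ℂ).re ≤ ‖x‖^2 * (Lf z).re := by
    intro z hz x
    have := hinner_sum z hz x
    have h2 := hre₂ z hz x
    nlinarith
  have hdF : ∀ z ∈ ball (0:ℂ) 1, DifferentiableAt ℂ F z := by
    intro z hz
    apply DifferentiableAt.mul
    · exact (differentiableAt_const _).add (hd₁ z hz)
    · exact (differentiableAt_inverse (hinv₁ z hz)).comp z
        ((differentiableAt_const _).sub (hd₁ z hz))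
  -- scalar representation
  have hfx : ∀ x : E, ∀ z ∈ ball (0:ℂ) 1, (inner ℂ x (F z x) : ℂ)
      = (((inner ℂ x (F 0 x) : ℂ).re : ℝ) : ℂ) * Lf z
        + Complex.I * (((inner ℂ x (F 0 x) : ℂ).im : ℝ) : ℂ) := by
    intro x
    have hdiff : DifferentiableOn ℂ (fun z => (inner ℂ x (F z x) : ℂ)) (ball 0 1) := by
      intro z hz
      apply DifferentiableAt.differentiableWithinAt
      have h1 : DifferentiableAt ℂ (fun z => F z x) z :=
        ((ContinuousLinearMap.apply ℂ E x).differentiableAt).comp z (hdF z hz)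
      exact ((innerSL ℂ x).differentiableAt).comp z h1
    exact scalar_herglotz hdiff (fun z hz => hre₁ z hz x) (fun z hz => hupper z hz x)
  -- define A and B
  set T : E →L[ℂ] E := F 0 with hT_def
  set B : E →L[ℂ] E := ((2:ℂ)⁻¹) • (T + star T) with hB_def
  set A : E →L[ℂ] E := (-(Complex.I) * (2:ℂ)⁻¹) • (T - star T) with hA_def
  have hstar_inner : ∀ x : E, (inner ℂ x ((star T) x) : ℂ) = starRingEnd ℂ (inner ℂ x (T x) : ℂ) := by
    intro x
    rw [ContinuousLinearMap.star_eq_adjoint, ContinuousLinearMap.adjoint_inner_right]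
    exact (inner_conj_symm (T x) x).symm
  have hBx : ∀ x : E, (inner ℂ x (B x) : ℂ) = (((inner ℂ x (T x) : ℂ).re : ℝ) : ℂ) := by
    intro x
    rw [hB_def]
    rw [ContinuousLinearMap.smul_apply, inner_smul_right, ContinuousLinearMap.add_apply,
      inner_add_right, hstar_inner]
    rw [Complex.add_conj]
    push_cast
    ring
  have hAx : ∀ x : E, (inner ℂ x (A x) : ℂ) = (((inner ℂ x (T x) : ℂ).im : ℝ) : ℂ) := by
    intro x
    rw [hA_def]
    rw [ContinuousLinearMap.smul_apply, inner_smul_right, ContinuousLinearMap.sub_apply,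
      inner_sub_right, hstar_inner]
    rw [Complex.sub_conj]
    push_cast
    linear_combination (-((inner ℂ x (T x) : ℂ).im : ℂ)) * Complex.I_mul_I
  have hBsa : IsSelfAdjoint B := by
    show star B = B
    rw [hB_def, star_smul, star_add, star_star]
    rw [star_inv₀]  -- maybe star (2:ℂ)⁻¹
    norm_num
    rw [add_comm]
  have hAsa : IsSelfAdjoint A := by
    show star A = A
    rw [hA_def, star_smul, star_sub, star_star]
    have h1 : star (-(Complex.I) * (2:ℂ)⁻¹) = Complex.I * (2:ℂ)⁻¹ := by
      simp [star_mul', Complex.star_def]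
    rw [h1, smul_sub, smul_sub, neg_mul, neg_smul, neg_smul]
    abel
  have hwre : ∀ x : E, 0 ≤ (inner ℂ x (T x) : ℂ).re := fun x => hre₁ 0 h0D x
  have hwub : ∀ x : E, (inner ℂ x (T x) : ℂ).re ≤ ‖x‖^2 := by
    intro x
    have := hupper 0 h0D x
    rw [hLf0] at this
    simpa using this
  have hfx' : ∀ (x : E), ∀ z ∈ ball (0:ℂ) 1, (inner ℂ x (F z x) : ℂ)
      = (((inner ℂ x (T x) : ℂ).re : ℝ) : ℂ) * Lf z
        + Complex.I * (((inner ℂ x (T x) : ℂ).im : ℝ) : ℂ) := hfx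
  clear_value T B A
  have hBpos : B.IsPositive := by
    constructor
    · exact ContinuousLinearMap.isSelfAdjoint_iff_isSymmetric.mp hBsa
    · intro x
      rw [ContinuousLinearMap.reApplyInnerSelf_apply]
      have h1 : (inner ℂ (B x) x : ℂ) = (((inner ℂ x (T x) : ℂ).re : ℝ) : ℂ) := by
        rw [← inner_conj_symm (B x) x, hBx]
        simp [Complex.conj_ofReal]
      rw [h1]
      simpa using hwre x
  have h1mBpos : (1 - B).IsPositive := by
    constructor
    · exact ContinuousLinearMap.isSelfAdjoint_iff_isSymmetric.mp ((IsSelfAdjoint.one (E →L[ℂ] E)).sub hBsa)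
    · intro x
      rw [ContinuousLinearMap.reApplyInnerSelf_apply]
      have h1 : (inner ℂ ((1 - B) x) x : ℂ)
          = ((((‖x‖:ℝ)^2 - (inner ℂ x (T x) : ℂ).re : ℝ)) : ℂ) := by
        rw [← inner_conj_symm ((1 - B) x) x]
        rw [ContinuousLinearMap.sub_apply, ContinuousLinearMap.one_apply, inner_sub_right, hBx,
          inner_self_eq_norm_sq_to_K]
        rw [map_sub]
        simp [Complex.conj_ofReal]
      rw [h1]
      have := hwub x
      rw [RCLike.re_to_complex, Complex.ofReal_re]
      linarith
  have hmain₁ : ∀ z ∈ ball (0:ℂ) 1, F z = Complex.I • A + Lf z • B := by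
    intro z hz
    apply ContinuousLinearMap.coe_injective
    apply (ext_inner_map (↑(F z) : E →ₗ[ℂ] E) (↑(Complex.I • A + Lf z • B) : E →ₗ[ℂ] E)).mp
    intro x
    simp only [ContinuousLinearMap.coe_coe]
    rw [← inner_conj_symm (F z x) x, ← inner_conj_symm ((Complex.I • A + Lf z • B) x) x]
    congr 1
    rw [ContinuousLinearMap.add_apply, ContinuousLinearMap.smul_apply,
      ContinuousLinearMap.smul_apply, inner_add_right, inner_smul_right, inner_smul_right,
      hAx, hBx, hfx' x z hz]
    ring
  have hmain₂ : ∀ z ∈ ball (0:ℂ) 1, G z = -(Complex.I • A) + Lf z • (1 - B) := by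
    intro z hz
    have h1 : G z = Lf z • (1 : E →L[ℂ] E) - F z := by
      rw [hLf_eq]
      exact eq_sub_of_add_eq' (hsum z hz)
    rw [h1, hmain₁ z hz, smul_sub]
    abel
  refine ⟨A, B, hAsa, hBpos, h1mBpos, ?_, ?_⟩
  · intro z hz
    have := hmain₁ z hz
    rwa [hLf_eq] at this
  · intro z hz
    have := hmain₂ z hz
    rwa [hLf_eq] at this
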